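/- Let λ > 0, γ > 0, p ∈ (0, 1), and x₀ ∈ (0, 1). Define g : (0, 1) → ℝ by g(y) := p(1/y + log((1−y)/y)) + (1−p)(1/(1−y) + log(y/(1−y))), and h : (0, 1) → ℝ by h(x) := x₀ + ∫_{x₀}^x exp((2λ/γ) g(y)) dy. Then h is strictly increasing on (0, 1), h(x) → −∞ as x → 0⁺, and h(x) → +∞ as x → 1⁻. -/

import Mathlib

open Real Filter Topology

lemma aux1 (a b : ℝ) (ha : 0 < a) :
    Tendsto (fun t : ℝ => a * t + b * Real.log t) atTop atTop := by
  have h1 : (fun t : ℝ => b * Real.log t) =o[atTop] (fun t : ℝ => t) :=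
    Real.isLittleO_log_id_atTop.const_mul_left b
  have h2 := h1.def (show (0:ℝ) < a/2 by linarith)
  apply tendsto_atTop_mono' _ _ (tendsto_id.const_mul_atTop (show (0:ℝ) < a/2 by linarith))
  filter_upwards [h2, eventually_ge_atTop (0:ℝ)] with t ht h0
  rw [Real.norm_eq_abs, Real.norm_eq_abs, abs_of_nonneg h0] at ht
  have := neg_abs_le (b * Real.log t)
  simp only [id] at *
  nlinarith [abs_nonneg (b * Real.log t)]

lemma aux2 (a b : ℝ) (ha : 0 < a) :
    Tendsto (fun s : ℝ => a / s + b * Real.log s) (𝓝[>] (0:ℝ)) atTop := by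
  have h := (aux1 a (-b) ha).comp tendsto_inv_nhdsGT_zero
  apply h.congr'
  filter_upwards [self_mem_nhdsWithin] with s hs
  have hs' : (0:ℝ) < s := hs
  simp [Function.comp, Real.log_inv, div_eq_mul_inv]

lemma claim0 (c p : ℝ) (hc : 0 < c) (hp : p ∈ Set.Ioo (0:ℝ) 1) :
    ∀ᶠ y in 𝓝[>] (0:ℝ), 1/y ≤ Real.exp (c * (p * (1 / y + Real.log ((1 - y) / y))
      + (1 - p) * (1 / (1 - y) + Real.log (y / (1 - y))))) := by
  set G : ℝ → ℝ := fun y => c * (p * (1 / y + Real.log ((1 - y) / y))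
      + (1 - p) * (1 / (1 - y) + Real.log (y / (1 - y)))) with hG
  have key : Tendsto (fun y => G y + Real.log y) (𝓝[>] (0:ℝ)) atTop := by
    have hmem : Set.Ioo (0:ℝ) 1 ∈ 𝓝[>] (0:ℝ) :=
      Ioo_mem_nhdsGT_of_mem (by constructor <;> norm_num)
    have heq : (fun y => G y + Real.log y) =ᶠ[𝓝[>] (0:ℝ)]
        (fun y => (c * p / y + (1 + c * (1 - 2*p)) * Real.log y)
          + (c * (1 - p) / (1 - y) + c * (2*p - 1) * Real.log (1 - y))) := by
      filter_upwards [hmem] with y hy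
      have hy0 : y ≠ 0 := ne_of_gt hy.1
      have hy1 : (1:ℝ) - y ≠ 0 := by have := hy.2; intro h; linarith [sub_eq_zero.mp h]
      simp only [hG, Real.log_div hy1 hy0, Real.log_div hy0 hy1]
      ring
    rw [tendsto_congr' heq]
    apply Tendsto.atTop_add
    · exact aux2 (c * p) _ (mul_pos hc hp.1)
    · have hcont : ContinuousAt (fun y : ℝ => c * (1 - p) / (1 - y)
          + c * (2*p - 1) * Real.log (1 - y)) 0 := by
        have h1 : ContinuousAt (fun y : ℝ => (1:ℝ) - y) 0 := by fun_prop
        have h2 : ContinuousAt Real.log ((1:ℝ) - 0) := Real.continuousAt_log (by norm_num)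
        exact (continuousAt_const.div h1 (by norm_num)).add
          (continuousAt_const.mul (h2.comp h1))
      exact (hcont.tendsto.mono_left nhdsWithin_le_nhds)
  filter_upwards [key.eventually_ge_atTop 0, self_mem_nhdsWithin] with y hy hy0
  have hy0' : (0:ℝ) < y := hy0
  have : Real.exp (-Real.log y) ≤ Real.exp (G y) := by
    apply Real.exp_le_exp.mpr; linarith
  rw [Real.exp_neg, Real.exp_log hy0'] at this
  simpa [hG, one_div] using this

lemma claim1 (c p : ℝ) (hc : 0 < c) (hp : p ∈ Set.Ioo (0:ℝ) 1) :
    ∀ᶠ y in 𝓝[<] (1:ℝ), 1/(1-y) ≤ Real.exp (c * (p * (1 / y + Real.log ((1 - y) / y))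
      + (1 - p) * (1 / (1 - y) + Real.log (y / (1 - y))))) := by
  set G : ℝ → ℝ := fun y => c * (p * (1 / y + Real.log ((1 - y) / y))
      + (1 - p) * (1 / (1 - y) + Real.log (y / (1 - y)))) with hG
  have hsub : Tendsto (fun y : ℝ => 1 - y) (𝓝[<] (1:ℝ)) (𝓝[>] (0:ℝ)) := by
    apply tendsto_nhdsWithin_of_tendsto_nhds_of_eventually_within
    · have : Tendsto (fun y : ℝ => 1 - y) (𝓝 (1:ℝ)) (𝓝 (1 - 1)) :=
        (continuous_const.sub continuous_id).tendsto 1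
      simpa using this.mono_left nhdsWithin_le_nhds
    · filter_upwards [self_mem_nhdsWithin] with y hy
      have : y < 1 := hy
      simpa using this
  have key : Tendsto (fun y => G y + Real.log (1 - y)) (𝓝[<] (1:ℝ)) atTop := by
    have hmem : Set.Ioo (0:ℝ) 1 ∈ 𝓝[<] (1:ℝ) :=
      Ioo_mem_nhdsLT_of_mem (by constructor <;> norm_num)
    have heq : (fun y => G y + Real.log (1 - y)) =ᶠ[𝓝[<] (1:ℝ)]
        (fun y => (c * (1 - p) / (1 - y) + (1 + c * (2*p - 1)) * Real.log (1 - y))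
          + (c * p / y + c * (1 - 2*p) * Real.log y)) := by
      filter_upwards [hmem] with y hy
      have hy0 : y ≠ 0 := ne_of_gt hy.1
      have hy1 : (1:ℝ) - y ≠ 0 := by have := hy.2; intro h; linarith [sub_eq_zero.mp h]
      simp only [hG, Real.log_div hy1 hy0, Real.log_div hy0 hy1]
      ring
    rw [tendsto_congr' heq]
    apply Tendsto.atTop_add
    · exact (aux2 (c * (1 - p)) _ (mul_pos hc (by linarith [hp.2]))).comp hsub
    · have hcont : ContinuousAt (fun y : ℝ => c * p / y + c * (1 - 2*p) * Real.log y) 1 := by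
        have h2 : ContinuousAt Real.log (1:ℝ) := Real.continuousAt_log (by norm_num)
        exact (continuousAt_const.div continuousAt_id (by norm_num)).add
          (continuousAt_const.mul h2)
      exact (hcont.tendsto.mono_left nhdsWithin_le_nhds)
  filter_upwards [key.eventually_ge_atTop 0, self_mem_nhdsWithin] with y hy hy1
  have hy1' : (0:ℝ) < 1 - y := by have : y < 1 := hy1; linarith
  have : Real.exp (-Real.log (1-y)) ≤ Real.exp (G y) := by
    apply Real.exp_le_exp.mpr; linarith
  rw [Real.exp_neg, Real.exp_log hy1'] at this
  simpa [hG, one_div] using this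

/-- The scale function `h` is a strictly increasing bijection from `(0,1)` onto `ℝ`:
it is strictly monotone, tends to `-∞` at `0⁺` and to `+∞` at `1⁻`. -/
theorem scale_function_strictMono_and_unbounded
    (lam γ p x₀ : ℝ) (hlam : 0 < lam) (hγ : 0 < γ)
    (hp : p ∈ Set.Ioo (0 : ℝ) 1) (hx₀ : x₀ ∈ Set.Ioo (0 : ℝ) 1)
    (g h : ℝ → ℝ)
    (hg : g = fun y => p * (1 / y + Real.log ((1 - y) / y))
      + (1 - p) * (1 / (1 - y) + Real.log (y / (1 - y))))
    (hh : h = fun x => x₀ + ∫ y in x₀..x, Real.exp (2 * lam / γ * g y)) :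
    StrictMonoOn h (Set.Ioo (0 : ℝ) 1) ∧
    Tendsto h (𝓝[>] (0 : ℝ)) atBot ∧
    Tendsto h (𝓝[<] (1 : ℝ)) atTop := by
  set c : ℝ := 2 * lam / γ with hc_def
  have hc : 0 < c := by positivity
  set f : ℝ → ℝ := fun y => Real.exp (c * g y) with hf
  -- continuity of f on (0,1)
  have hgc : ContinuousOn g (Set.Ioo (0:ℝ) 1) := by
    rw [hg]
    have hy0 : ∀ y ∈ Set.Ioo (0:ℝ) 1, y ≠ 0 := fun y hy => ne_of_gt hy.1
    have hy1 : ∀ y ∈ Set.Ioo (0:ℝ) 1, (1:ℝ) - y ≠ 0 := fun y hy => by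
      have := hy.2; intro hcon; linarith [sub_eq_zero.mp hcon]
    apply ContinuousOn.add
    · apply continuousOn_const.mul
      apply ContinuousOn.add
      · exact continuousOn_const.div continuousOn_id hy0
      · apply ContinuousOn.log
        · exact (continuousOn_const.sub continuousOn_id).div continuousOn_id hy0
        · exact fun y hy => div_ne_zero (hy1 y hy) (hy0 y hy)
    · apply continuousOn_const.mul
      apply ContinuousOn.add
      · exact continuousOn_const.div (continuousOn_const.sub continuousOn_id) hy1
      · apply ContinuousOn.log
        · exact continuousOn_id.div (continuousOn_const.sub continuousOn_id) hy1
        · exact fun y hy => div_ne_zero (hy0 y hy) (hy1 y hy)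
  have hfc : ContinuousOn f (Set.Ioo (0:ℝ) 1) :=
    Real.continuous_exp.comp_continuousOn (continuousOn_const.mul hgc)
  have hsub : ∀ a b : ℝ, a ∈ Set.Ioo (0:ℝ) 1 → b ∈ Set.Ioo (0:ℝ) 1 →
      Set.uIcc a b ⊆ Set.Ioo (0:ℝ) 1 := by
    intro a b ha hb x hx
    rw [Set.mem_uIcc] at hx
    rcases hx with ⟨h1, h2⟩ | ⟨h1, h2⟩
    · exact ⟨lt_of_lt_of_le ha.1 h1, lt_of_le_of_lt h2 hb.2⟩
    · exact ⟨lt_of_lt_of_le hb.1 h1, lt_of_le_of_lt h2 ha.2⟩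
  have hInt : ∀ a b : ℝ, a ∈ Set.Ioo (0:ℝ) 1 → b ∈ Set.Ioo (0:ℝ) 1 →
      IntervalIntegrable f MeasureTheory.volume a b := fun a b ha hb =>
    (hfc.mono (hsub a b ha hb)).intervalIntegrable
  have hhx : ∀ x : ℝ, h x = x₀ + ∫ y in x₀..x, f y := by
    intro x; rw [hh]
  refine ⟨?_, ?_, ?_⟩
  · -- strict monotonicity
    intro a ha b hb hab
    rw [hhx a, hhx b]
    have key : (∫ y in x₀..b, f y) - ∫ y in x₀..a, f y = ∫ y in a..b, f y :=
      intervalIntegral.integral_interval_sub_left (hInt x₀ b hx₀ hb) (hInt x₀ a hx₀ ha)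
    have pos : 0 < ∫ y in a..b, f y :=
      intervalIntegral.intervalIntegral_pos_of_pos_on (hInt a b ha hb)
        (fun x _ => Real.exp_pos _) hab
    linarith
  · -- tendsto atBot at 0⁺
    have hcl : ∀ᶠ y in 𝓝[>] (0:ℝ), 1/y ≤ f y := by
      have := claim0 c p hc hp
      simpa [hf, hg] using this
    obtain ⟨u, hu, hsub0⟩ := mem_nhdsGT_iff_exists_Ioc_subset.mp hcl
    have hu0 : (0:ℝ) < u := hu
    set δ : ℝ := min u x₀ with hδ_def
    have hδ0 : 0 < δ := lt_min hu0 hx₀.1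
    have hδx₀ : δ ≤ x₀ := min_le_right _ _
    have hδ1 : δ < 1 := lt_of_le_of_lt hδx₀ hx₀.2
    have hδmem : δ ∈ Set.Ioo (0:ℝ) 1 := ⟨hδ0, hδ1⟩
    have hbound : ∀ x ∈ Set.Ioo (0:ℝ) δ, h x ≤ x₀ - Real.log δ + Real.log x := by
      intro x hx
      have hxmem : x ∈ Set.Ioo (0:ℝ) 1 := ⟨hx.1, lt_trans hx.2 hδ1⟩
      have hI1 := hInt x δ hxmem hδmem
      have hI2 := hInt δ x₀ hδmem hx₀
      have hsplit : (∫ y in x..δ, f y) + ∫ y in δ..x₀, f y = ∫ y in x..x₀, f y :=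
        intervalIntegral.integral_add_adjacent_intervals hI1 hI2
      have h2 : 0 ≤ ∫ y in δ..x₀, f y :=
        intervalIntegral.integral_nonneg hδx₀ (fun y _ => (Real.exp_pos _).le)
      have hIone : IntervalIntegrable (fun y : ℝ => 1/y) MeasureTheory.volume x δ := by
        apply ContinuousOn.intervalIntegrable
        apply continuousOn_const.div continuousOn_id
        intro y hy
        have := hsub x δ hxmem hδmem hy
        simp only [id]
        exact ne_of_gt this.1
      have h1 : (∫ y in x..δ, (1/y)) ≤ ∫ y in x..δ, f y := by
        apply intervalIntegral.integral_mono_on hx.2.le hIone hI1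
        intro y hy
        apply hsub0
        exact ⟨lt_of_lt_of_le hx.1 hy.1, le_trans hy.2 (min_le_left _ _)⟩
      have hlog : (∫ y in x..δ, (1/y)) = Real.log δ - Real.log x := by
        rw [integral_one_div, Real.log_div (ne_of_gt hδ0) (ne_of_gt hx.1)]
        intro hmem
        have := hsub x δ hxmem hδmem hmem
        exact lt_irrefl 0 this.1
      have hsym : h x = x₀ - ∫ y in x..x₀, f y := by
        rw [hhx x, intervalIntegral.integral_symm]; ring
      rw [hsym]
      rw [← hsplit]
      rw [hlog] at h1
      linarith
    apply tendsto_atBot_mono' (𝓝[>] (0:ℝ))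
      (f₁ := fun x : ℝ => x₀ - Real.log δ + Real.log x)
    · filter_upwards [Ioo_mem_nhdsGT_of_mem (Set.mem_Ico.mpr ⟨le_refl 0, hδ0⟩)] with x hx
      exact hbound x hx
    · apply Filter.Tendsto.add_atBot tendsto_const_nhds
      exact Real.tendsto_log_nhdsGT_zero
  · -- tendsto atTop at 1⁻
    have hcl : ∀ᶠ y in 𝓝[<] (1:ℝ), 1/(1-y) ≤ f y := by
      have := claim1 c p hc hp
      simpa [hf, hg] using this
    obtain ⟨u, hu, hsub1⟩ := mem_nhdsLT_iff_exists_Ico_subset.mp hcl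
    have hu1 : u < 1 := hu
    set δ : ℝ := max u x₀ with hδ_def
    have hδx₀ : x₀ ≤ δ := le_max_right _ _
    have hδ0 : 0 < δ := lt_of_lt_of_le hx₀.1 hδx₀
    have hδ1 : δ < 1 := max_lt hu1 hx₀.2
    have hδmem : δ ∈ Set.Ioo (0:ℝ) 1 := ⟨hδ0, hδ1⟩
    have hbound : ∀ x ∈ Set.Ioo δ 1, x₀ + Real.log (1 - δ) - Real.log (1 - x) ≤ h x := by
      intro x hx
      have hxmem : x ∈ Set.Ioo (0:ℝ) 1 := ⟨lt_trans hδ0 hx.1, hx.2⟩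
      have hI1 := hInt x₀ δ hx₀ hδmem
      have hI2 := hInt δ x hδmem hxmem
      have hsplit : (∫ y in x₀..δ, f y) + ∫ y in δ..x, f y = ∫ y in x₀..x, f y :=
        intervalIntegral.integral_add_adjacent_intervals hI1 hI2
      have h2 : 0 ≤ ∫ y in x₀..δ, f y :=
        intervalIntegral.integral_nonneg hδx₀ (fun y _ => (Real.exp_pos _).le)
      have hIone : IntervalIntegrable (fun y : ℝ => 1/(1-y)) MeasureTheory.volume δ x := by
        apply ContinuousOn.intervalIntegrable
        apply continuousOn_const.div (continuousOn_const.sub continuousOn_id)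
        intro y hy
        have hmem := hsub δ x hδmem hxmem hy
        simp only [Pi.sub_apply, id]
        intro hcon; linarith [sub_eq_zero.mp hcon, hmem.2]
      have h1 : (∫ y in δ..x, (1/(1-y))) ≤ ∫ y in δ..x, f y := by
        apply intervalIntegral.integral_mono_on hx.1.le hIone hI2
        intro y hy
        apply hsub1
        exact ⟨le_trans (le_max_left _ _) hy.1, lt_of_le_of_lt hy.2 hx.2⟩
      have hlog : (∫ y in δ..x, (1/(1-y))) = Real.log (1-δ) - Real.log (1-x) := by
        have := intervalIntegral.integral_comp_sub_left (a := δ) (b := x)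
          (fun u : ℝ => 1/u) 1
        rw [this, integral_one_div, Real.log_div (by linarith [hδmem.2]) (by linarith [hxmem.2])]
        intro hmem
        rw [Set.mem_uIcc] at hmem
        rcases hmem with ⟨hm1, _⟩ | ⟨_, hm2⟩
        · linarith [hxmem.2]
        · linarith [hxmem.2]
      rw [hhx x, ← hsplit]
      rw [hlog] at h1
      linarith
    apply tendsto_atTop_mono' (𝓝[<] (1:ℝ))
      (f₁ := fun x : ℝ => x₀ + Real.log (1 - δ) - Real.log (1 - x))
    · filter_upwards [Ioo_mem_nhdsLT_of_mem (Set.mem_Ioc.mpr ⟨hδ1, le_refl 1⟩)] with x hx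
      exact hbound x hx
    · have hlogtend : Tendsto (fun x : ℝ => Real.log (1 - x)) (𝓝[<] (1:ℝ)) atBot := by
        apply Real.tendsto_log_nhdsGT_zero.comp
        apply tendsto_nhdsWithin_of_tendsto_nhds_of_eventually_within
        · have : Tendsto (fun y : ℝ => 1 - y) (𝓝 (1:ℝ)) (𝓝 (1 - 1)) :=
            (continuous_const.sub continuous_id).tendsto 1
          simpa using this.mono_left nhdsWithin_le_nhds
        · filter_upwards [self_mem_nhdsWithin] with y hy
          have : y < 1 := hy
          simpa using this
      have hneg : Tendsto (fun x : ℝ => -Real.log (1 - x)) (𝓝[<] (1:ℝ)) atTop :=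
        tendsto_neg_atBot_atTop.comp hlogtend
      have := Filter.Tendsto.add_atTop
        (tendsto_const_nhds (x := x₀ + Real.log (1 - δ)) (f := 𝓝[<] (1:ℝ))) hneg
      simpa [sub_eq_add_neg] using this
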